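/- For every x ∈ (0,1) with x ≠ 1/2, the function T_X is differentiable at x and T_X'(x) = (b_X − (a_X + b_X)·L(x)) / (x·(1−x)·(ln(1/x − 1))²). -/

import Mathlib

open Real Filter Set Topology

/-- QRE response of the second player. -/
noncomputable def qreY (aY bY Ty : ℝ) (x : ℝ) : ℝ :=
  (1 + Real.exp ((bY - (aY + bY) * x) / Ty))⁻¹

/-- QRE temperature curve for the first player. -/
noncomputable def qreTX (aX bX aY bY Ty : ℝ) (x : ℝ) : ℝ :=
  (bX - (aX + bX) * qreY aY bY Ty x) / Real.log (1 / x - 1)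

/-- The auxiliary function L(x) = y(x) + x(1-x) ln(1/x-1) y'(x). -/
noncomputable def qreL (aY bY Ty : ℝ) (x : ℝ) : ℝ :=
  qreY aY bY Ty x + x * (1 - x) * Real.log (1 / x - 1) * deriv (qreY aY bY Ty) x

theorem stmt_1 (aX bX aY bY Ty : ℝ) (hTy : 0 < Ty) :
    ∀ x ∈ Set.Ioo (0:ℝ) 1, x ≠ 1/2 →
      DifferentiableAt ℝ (qreTX aX bX aY bY Ty) x ∧
      deriv (qreTX aX bX aY bY Ty) x =
        (bX - (aX + bX) * qreL aY bY Ty x) /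
          (x * (1 - x) * (Real.log (1 / x - 1))^2) := by
  have hy : ∀ t : ℝ, DifferentiableAt ℝ (qreY aY bY Ty) t := by
    intro t
    unfold qreY
    apply DifferentiableAt.inv
    · exact (differentiableAt_const _).add
        ((((differentiableAt_const _).sub
          ((differentiableAt_const _).mul differentiableAt_fun_id)).div_const _).exp)
    · positivity
  intro x hx hx2
  obtain ⟨hx0, hx1⟩ := hx
  have hxne : x ≠ 0 := ne_of_gt hx0
  have h1x : (0:ℝ) < 1 - x := by linarith
  have h1xne : (1:ℝ) - x ≠ 0 := ne_of_gt h1x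
  have hargpos : 0 < 1 / x - 1 := by
    rw [lt_sub_iff_add_lt, zero_add, lt_div_iff₀ hx0, one_mul]
    exact hx1
  have hargne1 : 1 / x - 1 ≠ 1 := by
    intro h
    apply hx2
    field_simp at h
    linarith
  have hlogne : Real.log (1 / x - 1) ≠ 0 := by
    intro h
    rcases Real.log_eq_zero.mp h with h' | h' | h'
    · exact absurd h' (ne_of_gt hargpos)
    · exact hargne1 h'
    · linarith
  have h1 : HasDerivAt (fun t : ℝ => 1 / t - 1) (-(x ^ 2)⁻¹) x := by
    simpa [one_div] using (hasDerivAt_inv hxne).sub_const 1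
  have hg : HasDerivAt (fun t : ℝ => Real.log (1 / t - 1)) (-(x * (1 - x))⁻¹) x := by
    have := h1.log (ne_of_gt hargpos)
    convert this using 1
    field_simp
  have hyd : HasDerivAt (qreY aY bY Ty) (deriv (qreY aY bY Ty) x) x :=
    (hy x).hasDerivAt
  have hN : HasDerivAt (fun t : ℝ => bX - (aX + bX) * qreY aY bY Ty t)
      (-((aX + bX) * deriv (qreY aY bY Ty) x)) x :=
    (hyd.const_mul (aX + bX)).const_sub bX
  have hT : HasDerivAt (qreTX aX bX aY bY Ty)
      ((-((aX + bX) * deriv (qreY aY bY Ty) x) * Real.log (1 / x - 1) -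
        (bX - (aX + bX) * qreY aY bY Ty x) * -(x * (1 - x))⁻¹) /
        (Real.log (1 / x - 1)) ^ 2) x := by
    have := hN.div hg hlogne
    exact this
  refine ⟨hT.differentiableAt, ?_⟩
  rw [hT.deriv]
  unfold qreL
  field_simp
  ring
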